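/- For any unbounded increasing sequence b⃗ = (b(n)) of positive reals, the equivalence relation ℓ_∞ on ℝ^ω (defined by x⃗ E y⃗ iff sup_n |x(n)−y(n)| < ∞) is Borel reducible to its restriction to the compact set Π_n [0, b(n)]. -/
import Mathlib

noncomputable section
open Classical

namespace LinftyAux

def clamp (c t : ℝ) : ℝ := max 0 (min c t)

lemma clamp_nonneg (c t : ℝ) : 0 ≤ clamp c t := le_max_left _ _

lemma clamp_le (c t : ℝ) (hc : 0 ≤ c) : clamp c t ≤ c := by
  simp only [clamp, max_le_iff]
  exact ⟨hc, min_le_left _ _⟩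

lemma clamp_eq_self (c t : ℝ) (h0 : 0 ≤ c) (h : c ≤ t) : clamp c t = c := by
  simp [clamp, min_eq_left h, max_eq_right h0]

lemma clamp_eq_zero (c t : ℝ) (h : t ≤ 0) : clamp c t = 0 := by
  have : min c t ≤ 0 := le_trans (min_le_right _ _) h
  simp [clamp, max_eq_left this]

lemma clamp_lip (c s t : ℝ) : |clamp c s - clamp c t| ≤ |s - t| := by
  have h1 : s - t ≤ |s - t| := le_abs_self _
  have h2 : t - s ≤ |s - t| := by rw [abs_sub_comm]; exact le_abs_self _
  rw [abs_sub_le_iff]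
  constructor <;> · simp only [clamp, max_def, min_def]; split_ifs <;> linarith

def d : ℕ ≃ ℕ × ℤ × ℕ := (Denumerable.eqv (ℕ × ℤ × ℕ)).symm

def kOf (i : ℕ) : ℕ := (d i).1
def jOf (i : ℕ) : ℤ := (d i).2.1
def mOf (i : ℕ) : ℕ := (d i).2.2

lemma kOf_symm (k : ℕ) (j : ℤ) (m : ℕ) : kOf (d.symm (k, j, m)) = k := by
  simp [kOf]
lemma jOf_symm (k : ℕ) (j : ℤ) (m : ℕ) : jOf (d.symm (k, j, m)) = j := by
  simp [jOf]
lemma mOf_symm (k : ℕ) (j : ℤ) (m : ℕ) : mOf (d.symm (k, j, m)) = m := by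
  simp [mOf]

variable (b : ℕ → ℝ) (hunb : ∀ C : ℝ, ∃ n, C < b n)

def N (m : ℕ) : ℕ := (hunb (m : ℝ)).choose

lemma lt_b_N (m : ℕ) : (m : ℝ) < b (N b hunb m) := (hunb (m : ℝ)).choose_spec

def g : ℕ → ℕ
  | 0 => N b hunb (mOf 0)
  | i + 1 => max (g i + 1) (N b hunb (mOf (i + 1)))

lemma g_strictMono : StrictMono (g b hunb) :=
  strictMono_nat_of_lt_succ fun i => lt_of_lt_of_le (Nat.lt_succ_self _) (le_max_left _ _)

lemma N_le_g (i : ℕ) : N b hunb (mOf i) ≤ g b hunb i := by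
  cases i with
  | zero => exact le_refl _
  | succ i => exact le_max_right _ _

lemma m_lt_b_g (hmono : Monotone b) (i : ℕ) : (mOf i : ℝ) < b (g b hunb i) :=
  lt_of_lt_of_le (lt_b_N b hunb (mOf i)) (hmono (N_le_g b hunb i))

def f (x : ℕ → ℝ) (n : ℕ) : ℝ :=
  if h : ∃ i, g b hunb i = n then
    clamp (mOf h.choose) (x (kOf h.choose) - (jOf h.choose : ℝ) * (mOf h.choose : ℝ))
  else 0

lemma f_apply (x : ℕ → ℝ) (i : ℕ) :
    f b hunb x (g b hunb i) = clamp (mOf i) (x (kOf i) - (jOf i : ℝ) * (mOf i : ℝ)) := by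
  have h : ∃ i', g b hunb i' = g b hunb i := ⟨i, rfl⟩
  rw [f, dif_pos h]
  have : h.choose = i := (g_strictMono b hunb).injective h.choose_spec
  rw [this]

end LinftyAux

open LinftyAux in
/-- For any unbounded increasing sequence `b` of positive reals, the `ℓ_∞` equivalence
relation on `ℝ^ω` is Borel reducible to its restriction to `Π_n [0, b(n)]`. -/
theorem linfty_reducible_to_restriction
    (b : ℕ → ℝ) (hpos : ∀ n, 0 < b n) (hmono : StrictMono b)
    (hunb : ∀ C : ℝ, ∃ n, C < b n) :
    ∃ f : (ℕ → ℝ) → (ℕ → ℝ), Measurable f ∧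
      (∀ x n, f x n ∈ Set.Icc 0 (b n)) ∧
      ∀ x y : ℕ → ℝ,
        (∃ C : ℝ, ∀ n, |x n - y n| < C) ↔ (∃ C : ℝ, ∀ n, |f x n - f y n| < C) := by
  classical
  refine ⟨f b hunb, ?_, ?_, ?_⟩
  · -- measurability
    rw [measurable_pi_iff]
    intro n
    by_cases h : ∃ i, g b hunb i = n
    · simp only [f, dif_pos h]
      exact measurable_const.max (measurable_const.min
        ((measurable_pi_apply _).sub measurable_const))
    · simp only [f, dif_neg h]
      exact measurable_const
  · -- range
    intro x n
    by_cases h : ∃ i, g b hunb i = n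
    · have hn : g b hunb (h.choose) = n := h.choose_spec
      have hm : (mOf h.choose : ℝ) < b n := by
        have := m_lt_b_g b hunb hmono.monotone h.choose
        rwa [hn] at this
      simp only [f, dif_pos h]
      exact ⟨clamp_nonneg _ _, le_trans (clamp_le _ _ (Nat.cast_nonneg _)) hm.le⟩
    · simp only [f, dif_neg h]
      exact ⟨le_refl _, (hpos n).le⟩
  · -- reduction
    intro x y
    constructor
    · rintro ⟨C, hC⟩
      refine ⟨C, fun n => ?_⟩
      by_cases h : ∃ i, g b hunb i = n
      · simp only [f, dif_pos h]
        calc |clamp (mOf h.choose) (x (kOf h.choose) - (jOf h.choose : ℝ) * (mOf h.choose : ℝ))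
              - clamp (mOf h.choose) (y (kOf h.choose) - (jOf h.choose : ℝ) * (mOf h.choose : ℝ))|
            ≤ |(x (kOf h.choose) - (jOf h.choose : ℝ) * (mOf h.choose : ℝ))
              - (y (kOf h.choose) - (jOf h.choose : ℝ) * (mOf h.choose : ℝ))| := clamp_lip _ _ _
          _ = |x (kOf h.choose) - y (kOf h.choose)| := by ring_nf
          _ < C := hC _
      · simp only [f, dif_neg h, sub_self, abs_zero]
        exact lt_of_le_of_lt (abs_nonneg _) (hC 0)
    · rintro ⟨C, hC⟩
      obtain ⟨m, hm⟩ := exists_nat_gt C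
      have hm0 : (0 : ℝ) < m :=
        lt_of_le_of_lt (le_trans (abs_nonneg (f b hunb x 0 - f b hunb y 0)) (hC 0).le) hm
      have key : ∀ u v : ℕ → ℝ, (∀ n, |f b hunb u n - f b hunb v n| < C) →
          ∀ k, u k - v k < 2 * m := by
        intro u v hC k
        by_contra hcon
        push_neg at hcon
        set j : ℤ := ⌈v k / (m : ℝ)⌉ with hj
        have hjm_ge : v k ≤ (j : ℝ) * m := by
          rw [← div_le_iff₀ hm0]
          exact Int.le_ceil _
        have hjm_lt : (j : ℝ) * m < v k + m := by
          have h1 : (j : ℝ) < v k / m + 1 := Int.ceil_lt_add_one _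
          have := mul_lt_mul_of_pos_right h1 hm0
          rwa [add_mul, one_mul, div_mul_cancel₀ _ hm0.ne'] at this
        set i := d.symm (k, j, m) with hi
        have h1 : f b hunb u (g b hunb i) = m := by
          rw [f_apply, hi, kOf_symm, jOf_symm, mOf_symm]
          exact clamp_eq_self _ _ (Nat.cast_nonneg _) (by linarith)
        have h2 : f b hunb v (g b hunb i) = 0 := by
          rw [f_apply, hi, kOf_symm, jOf_symm, mOf_symm]
          exact clamp_eq_zero _ _ (by linarith)
        have := hC (g b hunb i)
        rw [h1, h2, sub_zero, abs_of_pos hm0] at this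
        linarith
      refine ⟨2 * m, fun k => ?_⟩
      rw [abs_sub_lt_iff]
      refine ⟨key x y hC k, key y x (fun n => ?_) k⟩
      rw [abs_sub_comm]; exact hC n
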